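/- arXiv:quant-ph/0005106 — 3 statements merged into one kernel-verified Lean document; each statement's English description precedes it below -/
import Mathlib

section
/- Let m ≥ 1 and d be positive integers and let σ : {0,1}^m → Matrix (Fin d) (Fin d) ℂ assign to every m-bit string a density matrix. Let Δ = 2^{-2m} · ∑_{x₁, x₂ ∈ {0,1}^m} ‖σ_{x₁} − σ_{x₂}‖₁. Then there exists a fixed-point-free involution f : {0,1}^m → {0,1}^m (a perfect pairing of the 2^m strings) such that 2^{-m} · ∑_{x ∈ {0,1}^m} ‖σ_x − σ_{f(x)}‖₁ ≥ Δ. -/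
open Matrix BigOperators Kronecker
open scoped ComplexOrder

noncomputable section
open Classical

/-- The positive semidefinite square root of a matrix (junk value `0` if not PSD). -/
def msqrt {d : Type*} [Fintype d] [DecidableEq d] (A : Matrix d d ℂ) : Matrix d d ℂ :=
  if h : A.PosSemidef then
    (h.1.eigenvectorUnitary : Matrix d d ℂ) *
      diagonal ((↑) ∘ Real.sqrt ∘ h.1.eigenvalues) * (star h.1.eigenvectorUnitary : Matrix d d ℂ)
  else 0

/-- The trace norm `Tr √(AᴴA)` of a complex matrix. -/
def traceNorm {d : Type*} [Fintype d] [DecidableEq d] (A : Matrix d d ℂ) : ℝ :=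
  ((msqrt (Aᴴ * A)).trace).re

/-- `ρ` is a density matrix: positive semidefinite with trace `1`. -/
def IsDensityMatrix {d : Type*} [Fintype d] [DecidableEq d] (ρ : Matrix d d ℂ) : Prop :=
  ρ.PosSemidef ∧ ρ.trace = 1

/-- Von Neumann entropy, base 2 (junk value `0` if not Hermitian). -/
def vnEntropy {d : Type*} [Fintype d] [DecidableEq d] (ρ : Matrix d d ℂ) : ℝ :=
  if h : ρ.IsHermitian then -∑ i, (h.eigenvalues i) * Real.logb 2 (h.eigenvalues i) else 0

/-- The binary entropy function, base 2. -/
def binEntropy (p : ℝ) : ℝ := -p * Real.logb 2 p - (1 - p) * Real.logb 2 (1 - p)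

/-- Fidelity of two matrices: `(Tr √(√ρ₁ ρ₂ √ρ₁))²`. -/
def fidelity {d : Type*} [Fintype d] [DecidableEq d] (ρ₁ ρ₂ : Matrix d d ℂ) : ℝ :=
  (((msqrt (msqrt ρ₁ * ρ₂ * msqrt ρ₁)).trace).re) ^ 2

/-- Partial trace over the second tensor factor. -/
def ptraceSnd {m k : ℕ} (ρ : Matrix (Fin m × Fin k) (Fin m × Fin k) ℂ) :
    Matrix (Fin m) (Fin m) ℂ :=
  Matrix.of fun i j => ∑ l : Fin k, ρ (i, l) (j, l)

end


lemma traceNorm_nonneg_aux {d : Type*} [Fintype d] [DecidableEq d] (A : Matrix d d ℂ) :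
    0 ≤ traceNorm A := by
  classical
  unfold traceNorm msqrt
  rw [dif_pos (Matrix.posSemidef_conjTranspose_mul_self A)]
  rw [Matrix.trace_mul_cycle, Unitary.star_mul_self_of_mem
    (Matrix.posSemidef_conjTranspose_mul_self A).1.eigenvectorUnitary.prop, one_mul,
    Matrix.trace_diagonal, Complex.re_sum]
  exact Finset.sum_nonneg fun i _ => by simp [Real.sqrt_nonneg]

lemma traceNorm_zero_aux {d : Type*} [Fintype d] [DecidableEq d] :
    traceNorm (0 : Matrix d d ℂ) = 0 := by
  classical
  unfold traceNorm msqrt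
  have h0 : ((0 : Matrix d d ℂ)ᴴ * 0) = 0 := by simp
  rw [h0, dif_pos Matrix.PosSemidef.zero]
  rw [Matrix.trace_mul_cycle, Unitary.star_mul_self_of_mem
    (Matrix.PosSemidef.zero (n := d) (R := ℂ)).1.eigenvectorUnitary.prop, one_mul,
    Matrix.trace_diagonal, Complex.re_sum,
    ((Matrix.PosSemidef.zero (n := d) (R := ℂ)).1.eigenvalues_eq_zero_iff).mpr rfl]
  simp

/-- There is a perfect pairing (a fixed-point-free involution) of the `2^m` strings
whose average within-pair trace distance is at least the overall average pairwise
trace distance `Δ`. -/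
theorem exists_pairing_avg_dist (m d : ℕ) (hm : 1 ≤ m) (hd : 0 < d)
    (σ : (Fin m → Bool) → Matrix (Fin d) (Fin d) ℂ)
    (hσ : ∀ x, IsDensityMatrix (σ x)) :
    ∃ f : (Fin m → Bool) → (Fin m → Bool), Function.Involutive f ∧ (∀ x, f x ≠ x) ∧
      ((2 : ℝ) ^ m)⁻¹ * ∑ x : Fin m → Bool, traceNorm (σ x - σ (f x)) ≥
        ((2 : ℝ) ^ (2 * m))⁻¹ *
          ∑ x₁ : Fin m → Bool, ∑ x₂ : Fin m → Bool, traceNorm (σ x₁ - σ x₂) := by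
  classical
  set S : (Fin m → Bool) → ℝ :=
    fun c => ∑ x : Fin m → Bool, traceNorm (σ x - σ (fun i => xor (x i) (c i))) with hS
  set T : ℝ := ∑ x₁ : Fin m → Bool, ∑ x₂ : Fin m → Bool, traceNorm (σ x₁ - σ x₂) with hT
  have hTnonneg : 0 ≤ T :=
    Finset.sum_nonneg fun x _ => Finset.sum_nonneg fun y _ => traceNorm_nonneg_aux _
  have hsum : ∑ c : Fin m → Bool, S c = T := by
    rw [hS, hT, Finset.sum_comm]
    refine Finset.sum_congr rfl fun x _ => ?_
    have hinv : Function.Involutive (fun c : Fin m → Bool => fun i => xor (x i) (c i)) := by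
      intro c; funext i; simp [Bool.xor_left_comm]
    exact Fintype.sum_bijective _ hinv.bijective _ _ fun c => rfl
  set z : Fin m → Bool := fun _ => false with hz
  have hSz : S z = 0 := by
    rw [hS]
    refine Finset.sum_eq_zero fun x _ => ?_
    have hxz : (fun i => xor (x i) (z i)) = x := by funext i; simp [hz]
    rw [hxz, sub_self, traceNorm_zero_aux]
  have hcard : (Finset.univ.erase z).card = 2 ^ m - 1 := by
    rw [Finset.card_erase_of_mem (Finset.mem_univ z)]
    simp [Finset.card_univ]
  have h2pow : (2:ℕ) ≤ 2 ^ m := by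
    calc (2:ℕ) = 2^1 := (pow_one 2).symm
    _ ≤ 2^m := Nat.pow_le_pow_right (by norm_num) hm
  have hexists : ∃ c : Fin m → Bool, c ≠ z ∧ ((2:ℝ) ^ m)⁻¹ * T ≤ S c := by
    by_contra hcon
    push_neg at hcon
    have hlt : ∀ c ∈ Finset.univ.erase z, S c < ((2:ℝ)^m)⁻¹ * T := fun c hc =>
      hcon c (Finset.ne_of_mem_erase hc)
    have hne : (Finset.univ.erase z).Nonempty := by
      rw [← Finset.card_pos, hcard]; omega
    have hTeq : T = ∑ c ∈ Finset.univ.erase z, S c := by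
      rw [← hsum, ← Finset.sum_erase_add _ _ (Finset.mem_univ z), hSz, add_zero]
    have hsumlt : ∑ c ∈ Finset.univ.erase z, S c <
        ∑ c ∈ Finset.univ.erase z, ((2:ℝ)^m)⁻¹ * T :=
      Finset.sum_lt_sum_of_nonempty hne hlt
    rw [Finset.sum_const, hcard, nsmul_eq_mul, ← hTeq] at hsumlt
    have hcast : ((2 ^ m - 1 : ℕ) : ℝ) = (2:ℝ)^m - 1 := by
      have h1 : (1:ℕ) ≤ 2 ^ m := Nat.one_le_two_pow
      push_cast [h1]; ring
    rw [hcast] at hsumlt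
    have h2m : (0:ℝ) < 2 ^ m := by positivity
    have hIT : 0 ≤ ((2:ℝ)^m)⁻¹ * T := mul_nonneg (by positivity) hTnonneg
    have h1 : ((2:ℝ)^m - 1) * (((2:ℝ)^m)⁻¹ * T) = T - ((2:ℝ)^m)⁻¹ * T := by
      field_simp
    rw [h1] at hsumlt
    linarith
  obtain ⟨c, hcz, hcS⟩ := hexists
  refine ⟨fun x => fun i => xor (x i) (c i), ?_, ?_, ?_⟩
  · intro x; funext i; simp [Bool.xor_left_comm]
  · intro x hx
    apply hcz
    funext i
    have h := congrFun hx i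
    simp only at h
    have : c i = false := by
      cases hxi : x i <;> cases hci : c i <;> simp [hxi, hci] at h ⊢
    simpa [hz] using this
  · have goal2 : ((2:ℝ) ^ (2 * m))⁻¹ * T = ((2:ℝ)^m)⁻¹ * (((2:ℝ)^m)⁻¹ * T) := by
      rw [two_mul, pow_add, mul_inv]; ring
    rw [ge_iff_le, goal2]
    exact mul_le_mul_of_nonneg_left hcS (by positivity)
end

section
/- Let ρ₁ and ρ₂ be density matrices on ℂ^m, let k ≥ m, and let φ₁ ∈ ℂ^{Fin m × Fin k} be any unit vector whose partial trace over the second factor of |φ₁⟩⟨φ₁| equals ρ₁. Then there exists a unit vector φ₂ ∈ ℂ^{Fin m × Fin k} whose partial trace over the second factor of |φ₂⟩⟨φ₂| equals ρ₂ and such that |⟨φ₁, φ₂⟩|² = F(ρ₁, ρ₂), where ⟨φ₁, φ₂⟩ = ∑_s conj(φ₁(s))·φ₂(s). (Jozsa: the fidelity is achieved by some purification.) -/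
open Matrix BigOperators Kronecker
open scoped ComplexOrder

noncomputable section
open Classical

namespace Matrix

theorem IsHermitian.spectral_theorem_old {n : Type*} [Fintype n] [DecidableEq n] {A : Matrix n n ℂ}
    (hA : A.IsHermitian) :
    A = (hA.eigenvectorUnitary : Matrix n n ℂ) * diagonal (RCLike.ofReal ∘ hA.eigenvalues) *
      (star hA.eigenvectorUnitary : Matrix n n ℂ) := by
  conv_lhs => rw [hA.spectral_theorem]
  simp only [Unitary.conjStarAlgAut_apply]

theorem IsHermitian.star_mul_self_mul_eq_diagonal {n : Type*} [Fintype n] [DecidableEq n]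
    {A : Matrix n n ℂ} (hA : A.IsHermitian) :
    (star hA.eigenvectorUnitary : Matrix n n ℂ) * A * (hA.eigenvectorUnitary : Matrix n n ℂ) =
      diagonal (RCLike.ofReal ∘ hA.eigenvalues) := by
  have h1 : (star hA.eigenvectorUnitary : Matrix n n ℂ) * (hA.eigenvectorUnitary : Matrix n n ℂ) = 1 :=
    Unitary.coe_star_mul_self _
  have h2 := hA.spectral_theorem_old
  set U := (hA.eigenvectorUnitary : Matrix n n ℂ)
  set D : Matrix n n ℂ := diagonal (RCLike.ofReal ∘ hA.eigenvalues)
  clear_value U D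
  rw [h2]
  calc star U * (U * D * star U) * U = (star U * U) * D * (star U * U) := by
          simp only [Matrix.mul_assoc]
    _ = D := by rw [h1, Matrix.one_mul, Matrix.mul_one]

namespace PosSemidef

abbrev sqrt {n : Type*} [Fintype n] [DecidableEq n] {A : Matrix n n ℂ} (h : A.PosSemidef) :
    Matrix n n ℂ :=
  (h.1.eigenvectorUnitary : Matrix n n ℂ) * diagonal ((↑) ∘ Real.sqrt ∘ h.1.eigenvalues) *
      (star h.1.eigenvectorUnitary : Matrix n n ℂ)

theorem posSemidef_sqrt {n : Type*} [Fintype n] [DecidableEq n] {A : Matrix n n ℂ}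
    (h : A.PosSemidef) : h.sqrt.PosSemidef := by
  have hd : (diagonal ((↑) ∘ Real.sqrt ∘ h.1.eigenvalues) : Matrix n n ℂ).PosSemidef := by
    rw [posSemidef_diagonal_iff]
    intro i
    simp [Real.sqrt_nonneg]
  have := hd.mul_mul_conjTranspose_same (h.1.eigenvectorUnitary : Matrix n n ℂ)
  rw [← star_eq_conjTranspose] at this
  exact this

theorem sqrt_mul_self {n : Type*} [Fintype n] [DecidableEq n] {A : Matrix n n ℂ}
    (h : A.PosSemidef) : h.sqrt * h.sqrt = A := by
  have h1 : (star h.1.eigenvectorUnitary : Matrix n n ℂ) * (h.1.eigenvectorUnitary : Matrix n n ℂ) = 1 :=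
    Unitary.coe_star_mul_self _
  have hD : (diagonal ((↑) ∘ Real.sqrt ∘ h.1.eigenvalues) : Matrix n n ℂ) *
      diagonal ((↑) ∘ Real.sqrt ∘ h.1.eigenvalues) = diagonal (RCLike.ofReal ∘ h.1.eigenvalues) := by
    rw [diagonal_mul_diagonal]
    congr 1
    funext i
    simp only [Function.comp_apply]
    rw [← Complex.ofReal_mul, Real.mul_self_sqrt (h.eigenvalues_nonneg i)]
    rfl
  conv_rhs => rw [h.1.spectral_theorem_old]
  calc h.sqrt * h.sqrt = (h.1.eigenvectorUnitary : Matrix n n ℂ) *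
        (diagonal ((↑) ∘ Real.sqrt ∘ h.1.eigenvalues) *
        ((star h.1.eigenvectorUnitary : Matrix n n ℂ) * (h.1.eigenvectorUnitary : Matrix n n ℂ)) *
        diagonal ((↑) ∘ Real.sqrt ∘ h.1.eigenvalues)) *
        (star h.1.eigenvectorUnitary : Matrix n n ℂ) := by
          simp only [sqrt, Matrix.mul_assoc]
    _ = _ := by rw [h1, Matrix.mul_one, hD]

end PosSemidef
end Matrix

lemma polar_decomp {m k : ℕ} (hmk : m ≤ k) (A : Matrix (Fin m) (Fin k) ℂ)
    (ρ : Matrix (Fin m) (Fin m) ℂ) (hρ : ρ.PosSemidef) (hA : A * Aᴴ = ρ) :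
    ∃ V : Matrix (Fin m) (Fin k) ℂ, V * Vᴴ = 1 ∧ A = hρ.sqrt * V := by
  subst hA
  set hP := hρ
  set W : Matrix (Fin m) (Fin m) ℂ := (hP.1.eigenvectorUnitary : Matrix (Fin m) (Fin m) ℂ)
    with hWdef
  set μ : Fin m → ℝ := hP.1.eigenvalues with hμdef
  have hWW : W * Wᴴ = 1 := by
    rw [← star_eq_conjTranspose]
    exact Matrix.mem_unitaryGroup_iff.mp hP.1.eigenvectorUnitary.2
  have hWW' : Wᴴ * W = 1 := mul_eq_one_comm.mp hWW
  set B : Matrix (Fin m) (Fin k) ℂ := Wᴴ * A with hBdef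
  have hBB : B * Bᴴ = diagonal (fun i => (μ i : ℂ)) := by
    have := hP.1.star_mul_self_mul_eq_diagonal
    rw [star_eq_conjTranspose] at this
    calc B * Bᴴ = Wᴴ * (A * Aᴴ) * W := by
          simp only [hBdef, conjTranspose_mul, conjTranspose_conjTranspose, Matrix.mul_assoc]
      _ = diagonal (fun i => (μ i : ℂ)) := this
  have hμn : ∀ i, 0 ≤ μ i := hP.eigenvalues_nonneg
  have hsqrt : hP.sqrt = W * diagonal (fun i => (Real.sqrt (μ i) : ℂ)) * Wᴴ := by
    rw [Matrix.PosSemidef.sqrt, ← star_eq_conjTranspose]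
    rfl
  clear_value W μ
  clear hWdef hμdef
  have hB0 : ∀ i, μ i = 0 → ∀ l, B i l = 0 := by
    intro i hi l
    have h1 : (B * Bᴴ) i i = 0 := by rw [hBB, diagonal_apply_eq, hi]; simp
    rw [mul_apply] at h1
    simp only [conjTranspose_apply, RCLike.star_def, Complex.mul_conj] at h1
    have h2 : ∑ l, Complex.normSq (B i l) = 0 := by
      have := congrArg Complex.re h1
      simpa using this
    have := Finset.sum_eq_zero_iff_of_nonneg (fun j _ => Complex.normSq_nonneg (B i j)) |>.mp h2
      l (Finset.mem_univ l)
    exact Complex.normSq_eq_zero.mp this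
  set B' : Matrix (Fin m) (Fin k) ℂ :=
    Matrix.of (fun i l => ((Real.sqrt (μ i) : ℂ))⁻¹ * B i l) with hB'def
  have hB'0 : ∀ i, μ i = 0 → ∀ l, B' i l = 0 := by
    intro i hi l
    simp [hB'def, hB0 i hi l]
  have hB'B' : B' * B'ᴴ = diagonal (fun i => if μ i = 0 then 0 else 1) := by
    ext i j
    rw [mul_apply]
    simp only [hB'def, Matrix.of_apply, conjTranspose_apply, star_mul', RCLike.star_def]
    have hstep : ∑ x, ((Real.sqrt (μ i) : ℂ))⁻¹ * B i x *
        ((starRingEnd ℂ) ((Real.sqrt (μ j) : ℂ))⁻¹ * (starRingEnd ℂ) (B j x)) =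
        ((Real.sqrt (μ i) : ℂ))⁻¹ * (starRingEnd ℂ) ((Real.sqrt (μ j) : ℂ))⁻¹ *
        ∑ x, B i x * (starRingEnd ℂ) (B j x) := by
      rw [Finset.mul_sum]; exact Finset.sum_congr rfl fun x _ => by ring
    rw [hstep]
    have hsum : ∑ l, B i l * (starRingEnd ℂ) (B j l) = diagonal (fun i => (μ i : ℂ)) i j := by
      rw [← hBB, mul_apply]; simp [conjTranspose_apply]
    rw [hsum]
    by_cases hij : i = j
    · subst hij
      by_cases hi : μ i = 0
      · simp [hi]
      · have hpos : 0 < μ i := lt_of_le_of_ne (hμn i) (Ne.symm hi)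
        have hs : (Real.sqrt (μ i) : ℂ) ≠ 0 := by
          simp [Real.sqrt_ne_zero'.mpr hpos]
        have : (starRingEnd ℂ) ((Real.sqrt (μ i) : ℂ))⁻¹ = ((Real.sqrt (μ i) : ℂ))⁻¹ := by
          simp [← Complex.ofReal_inv]
        rw [this, diagonal_apply_eq, diagonal_apply_eq, if_neg hi]
        rw [← mul_inv]
        have : (Real.sqrt (μ i) : ℂ) * (Real.sqrt (μ i) : ℂ) = (μ i : ℂ) := by
          rw [← Complex.ofReal_mul, Real.mul_self_sqrt (hμn i)]
        rw [this]
        exact inv_mul_cancel₀ (by exact_mod_cast hi)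
    · rw [diagonal_apply_ne _ hij, diagonal_apply_ne _ hij, mul_zero]
  clear_value B'
  set Q : Matrix (Fin k) (Fin k) ℂ := 1 - B'ᴴ * B' with hQdef
  have hEB' : diagonal (fun i => if μ i = 0 then (0:ℂ) else 1) * B' = B' := by
    ext i l
    rw [diagonal_mul]
    by_cases hi : μ i = 0
    · simp [hi, hB'0 i hi l]
    · simp [hi]
  have hB'Q : B' * Q = 0 := by
    rw [hQdef, Matrix.mul_sub, Matrix.mul_one, ← Matrix.mul_assoc, hB'B', hEB', sub_self]
  have hQH : Q.IsHermitian := by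
    rw [hQdef]
    exact Matrix.isHermitian_one.sub (isHermitian_conjTranspose_mul_self B')
  have hQQ : Q * Q = Q := by
    have key : B'ᴴ * B' * (B'ᴴ * B') = B'ᴴ * B' := by
      calc B'ᴴ * B' * (B'ᴴ * B') = B'ᴴ * ((B' * B'ᴴ) * B') := by
            simp only [Matrix.mul_assoc]
        _ = B'ᴴ * B' := by rw [hB'B', hEB']
    rw [hQdef, Matrix.sub_mul, Matrix.mul_sub, Matrix.mul_sub, Matrix.one_mul, Matrix.mul_one,
      key]
    simp only [Matrix.one_mul]
    abel
  set W₂ : Matrix (Fin k) (Fin k) ℂ := (hQH.eigenvectorUnitary : Matrix (Fin k) (Fin k) ℂ)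
    with hW₂def
  set lam : Fin k → ℝ := hQH.eigenvalues with hlamdef
  have hW₂W₂ : W₂ * W₂ᴴ = 1 := by
    rw [← star_eq_conjTranspose]
    exact Matrix.mem_unitaryGroup_iff.mp hQH.eigenvectorUnitary.2
  have hW₂W₂' : W₂ᴴ * W₂ = 1 := mul_eq_one_comm.mp hW₂W₂
  have hspec : Q = W₂ * diagonal (fun j => (lam j : ℂ)) * W₂ᴴ := by
    have := hQH.spectral_theorem_old
    rw [star_eq_conjTranspose] at this
    exact this
  have hdiag : W₂ᴴ * Q * W₂ = diagonal (fun j => (lam j : ℂ)) := by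
    have := hQH.star_mul_self_mul_eq_diagonal
    rw [star_eq_conjTranspose] at this
    exact this
  clear_value W₂ lam
  clear hW₂def hlamdef
  have hDD : diagonal (fun j => (lam j : ℂ)) * diagonal (fun j => (lam j : ℂ)) =
      diagonal (fun j => (lam j : ℂ)) := by
    have h1 : W₂ᴴ * (Q * Q) * W₂ = (W₂ᴴ * Q * W₂) * (W₂ᴴ * Q * W₂) := by
      calc W₂ᴴ * (Q * Q) * W₂ = (W₂ᴴ * Q) * (Q * W₂) := by simp only [Matrix.mul_assoc]
        _ = (W₂ᴴ * Q) * ((W₂ * W₂ᴴ) * (Q * W₂)) := by rw [hW₂W₂, Matrix.one_mul]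
        _ = (W₂ᴴ * Q * W₂) * (W₂ᴴ * Q * W₂) := by simp only [Matrix.mul_assoc]
    rw [hdiag, hQQ, hdiag] at h1
    exact h1.symm
  have hlam01 : ∀ j, lam j = 0 ∨ lam j = 1 := by
    intro j
    rw [diagonal_mul_diagonal] at hDD
    have h := congrFun (congrFun hDD j) j
    simp only [diagonal_apply_eq] at h
    have hr : lam j * lam j = lam j := by exact_mod_cast h
    rcases mul_eq_zero.mp (show lam j * (lam j - 1) = 0 by nlinarith) with h' | h'
    · exact Or.inl h'
    · exact Or.inr (by linarith)
  have hBW₂ : ∀ i j, lam j ≠ 0 → (B' * W₂) i j = 0 := by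
    have hQW₂ : Q * W₂ = W₂ * diagonal (fun j => (lam j : ℂ)) := by
      rw [hspec]
      calc W₂ * diagonal (fun j => (lam j : ℂ)) * W₂ᴴ * W₂
          = W₂ * diagonal (fun j => (lam j : ℂ)) * (W₂ᴴ * W₂) := by
            simp only [Matrix.mul_assoc]
        _ = W₂ * diagonal (fun j => (lam j : ℂ)) := by rw [hW₂W₂', Matrix.mul_one]
    have h0 : B' * W₂ * diagonal (fun j => (lam j : ℂ)) = 0 := by
      calc B' * W₂ * diagonal (fun j => (lam j : ℂ)) = B' * (Q * W₂) := by
            rw [hQW₂, Matrix.mul_assoc]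
        _ = (B' * Q) * W₂ := by rw [Matrix.mul_assoc]
        _ = 0 := by rw [hB'Q, Matrix.zero_mul]
    intro i j hj
    have h := congrFun (congrFun h0 i) j
    rw [Matrix.mul_diagonal] at h
    have : (B' * W₂) i j * (lam j : ℂ) = 0 := h
    rcases mul_eq_zero.mp this with h' | h'
    · exact h'
    · exact absurd (by exact_mod_cast h') hj
  have ha : Fintype.card {i : Fin m // μ i = 0} + Fintype.card {i : Fin m // ¬ μ i = 0} = m := by
    rw [Fintype.card_subtype, Fintype.card_subtype,
      Finset.card_filter_add_card_filter_not (p := fun i => μ i = 0)]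
    simp
  have htr1 : Q.trace = (k : ℂ) - (Fintype.card {i : Fin m // ¬ μ i = 0} : ℂ) := by
    rw [hQdef, trace_sub, trace_one, trace_mul_comm, hB'B', trace_diagonal]
    congr 1
    · simp
    · rw [show ∑ i, (if μ i = 0 then (0:ℂ) else 1) = ∑ i, (if ¬ μ i = 0 then (1:ℂ) else 0) from
        Finset.sum_congr rfl fun i _ => by by_cases h : μ i = 0 <;> simp [h]]
      rw [Finset.sum_boole, Fintype.card_subtype]
  have htr2 : Q.trace = (Fintype.card {j : Fin k // ¬ lam j = 0} : ℂ) := by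
    conv_lhs => rw [hspec]
    rw [Matrix.trace_mul_cycle, hW₂W₂', Matrix.one_mul, trace_diagonal]
    rw [show ∑ j, (lam j : ℂ) = ∑ j, (if ¬ lam j = 0 then (1:ℂ) else 0) from
      Finset.sum_congr rfl fun j _ => by rcases hlam01 j with h | h <;> simp [h]]
    rw [Finset.sum_boole, Fintype.card_subtype]
  have hb : Fintype.card {j : Fin k // ¬ lam j = 0} + Fintype.card {i : Fin m // ¬ μ i = 0}
      = k := by
    have hc : (Fintype.card {j : Fin k // ¬ lam j = 0} : ℂ)
        + (Fintype.card {i : Fin m // ¬ μ i = 0} : ℂ) = (k : ℂ) := by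
      rw [← htr2]; rw [htr1]; ring
    exact_mod_cast hc
  have hcards : Fintype.card {i : Fin m // μ i = 0} ≤ Fintype.card {j : Fin k // ¬ lam j = 0} :=
    by omega
  obtain ⟨f⟩ := Function.Embedding.nonempty_of_card_le hcards
  set V' : Matrix (Fin m) (Fin k) ℂ :=
    Matrix.of (fun i l => if h : μ i = 0 then star (W₂ l (f ⟨i, h⟩)) else B' i l) with hV'def
  have hWTW : ∀ a a' : {j : Fin k // ¬ lam j = 0},
      ∑ l, star (W₂ l (a : Fin k)) * W₂ l (a' : Fin k) = if a = a' then 1 else 0 := by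
    intro a a'
    have : (W₂ᴴ * W₂) (a : Fin k) (a' : Fin k) = ∑ l, star (W₂ l (a : Fin k)) * W₂ l (a' : Fin k) := by
      rw [mul_apply]; simp [conjTranspose_apply]
    rw [← this, hW₂W₂', Matrix.one_apply]
    by_cases h : a = a'
    · simp [h, Subtype.ext_iff.mp h]
    · rw [if_neg (fun hc => h (Subtype.ext hc)), if_neg h]
  have hBVW : ∀ (i : Fin m) (a : {j : Fin k // ¬ lam j = 0}),
      ∑ l, B' i l * W₂ l (a : Fin k) = 0 := by
    intro i a
    have : (B' * W₂) i (a : Fin k) = ∑ l, B' i l * W₂ l (a : Fin k) := by rw [mul_apply]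
    rw [← this]
    exact hBW₂ i a a.2
  have hV'V' : V' * V'ᴴ = 1 := by
    ext i i'
    rw [mul_apply]
    simp only [hV'def, Matrix.of_apply, conjTranspose_apply]
    by_cases hi : μ i = 0 <;> by_cases hi' : μ i' = 0
    · simp only [dif_pos hi, dif_pos hi', star_star]
      rw [hWTW (f ⟨i, hi⟩) (f ⟨i', hi'⟩), Matrix.one_apply]
      by_cases h : i = i'
      · subst h; simp
      · rw [if_neg (fun hc => h (congrArg Subtype.val (f.injective hc))), if_neg h]
    · -- i zero, i' nonzero
      simp only [dif_pos hi, dif_neg hi']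
      have : ∑ l, star (W₂ l (f ⟨i, hi⟩ : Fin k)) * star (B' i' l)
          = star (∑ l, B' i' l * W₂ l (f ⟨i, hi⟩ : Fin k)) := by
        rw [star_sum]
        exact Finset.sum_congr rfl fun l _ => by rw [star_mul']; ring
      rw [this, hBVW i' (f ⟨i, hi⟩), star_zero, Matrix.one_apply_ne (fun hc => hi' (by rw [← hc]; exact hi))]
    · -- i nonzero, i' zero
      simp only [dif_neg hi, dif_pos hi', star_star]
      rw [hBVW i (f ⟨i', hi'⟩), Matrix.one_apply_ne (fun hc => hi (by rw [hc]; exact hi'))]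
    · simp only [dif_neg hi, dif_neg hi']
      have : ∑ l, B' i l * star (B' i' l) = (B' * B'ᴴ) i i' := by
        rw [mul_apply]; simp [conjTranspose_apply]
      rw [this, hB'B', Matrix.one_apply]
      by_cases h : i = i'
      · subst h; rw [diagonal_apply_eq, if_neg hi, if_pos rfl]
      · rw [diagonal_apply_ne _ h, if_neg h]
  refine ⟨W * V', ?_, ?_⟩
  · rw [conjTranspose_mul]
    calc (W * V') * (V'ᴴ * Wᴴ) = W * ((V' * V'ᴴ) * Wᴴ) := by simp only [Matrix.mul_assoc]
      _ = 1 := by rw [hV'V', Matrix.one_mul, hWW]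
  · have hDV' : diagonal (fun i => (Real.sqrt (μ i) : ℂ)) * V' = B := by
      ext i l
      rw [diagonal_mul]
      by_cases hi : μ i = 0
      · simp [hV'def, hi, hB0 i hi l]
      · rw [hV'def]
        simp only [Matrix.of_apply, dif_neg hi]
        rw [hB'def]
        simp only [Matrix.of_apply]
        have hpos : 0 < μ i := lt_of_le_of_ne (hμn i) (Ne.symm hi)
        have hs : (Real.sqrt (μ i) : ℂ) ≠ 0 := by
          simp [Real.sqrt_ne_zero'.mpr hpos]
        rw [← mul_assoc, mul_inv_cancel₀ hs, one_mul]
    rw [hsqrt]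
    calc A = W * B := by rw [hBdef, ← Matrix.mul_assoc, hWW, Matrix.one_mul]
      _ = W * (diagonal (fun i => (Real.sqrt (μ i) : ℂ)) * V') := by rw [hDV']
      _ = W * diagonal (fun i => (Real.sqrt (μ i) : ℂ)) * Wᴴ * (W * V') := by
          simp only [Matrix.mul_assoc]
          rw [← Matrix.mul_assoc Wᴴ W, hWW', Matrix.one_mul]

end

/-- **Jozsa.** Given any purification `φ₁` of `ρ₁`, the fidelity `F(ρ₁, ρ₂)` is
achieved by some purification `φ₂` of `ρ₂` in the same space. -/
theorem jozsa_fidelity_achieved (m k : ℕ) (hmk : m ≤ k)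
    (ρ₁ ρ₂ : Matrix (Fin m) (Fin m) ℂ)
    (h₁ : IsDensityMatrix ρ₁) (h₂ : IsDensityMatrix ρ₂)
    (φ₁ : Fin m × Fin k → ℂ) (hφ₁ : ∑ s, ‖φ₁ s‖ ^ 2 = 1)
    (hp₁ : ptraceSnd (Matrix.vecMulVec φ₁ (star φ₁)) = ρ₁) :
    ∃ φ₂ : Fin m × Fin k → ℂ, (∑ s, ‖φ₂ s‖ ^ 2 = 1) ∧
      ptraceSnd (Matrix.vecMulVec φ₂ (star φ₂)) = ρ₂ ∧
      ‖∑ s, (starRingEnd ℂ) (φ₁ s) * φ₂ s‖ ^ 2 = fidelity ρ₁ ρ₂ := by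
  classical
  have hptr : ∀ φ : Fin m × Fin k → ℂ, ptraceSnd (Matrix.vecMulVec φ (star φ)) =
      Matrix.of (fun i l => φ (i,l)) * (Matrix.of (fun (i : Fin m) (l : Fin k) => φ (i,l)))ᴴ := by
    intro φ
    ext i j
    simp [ptraceSnd, Matrix.vecMulVec_apply, Matrix.mul_apply, Matrix.conjTranspose_apply]
  set A₁ : Matrix (Fin m) (Fin k) ℂ := Matrix.of (fun i l => φ₁ (i, l)) with hA₁def
  have hA₁ρ : A₁ * A₁ᴴ = ρ₁ := by rw [← hp₁, hptr]
  set R₁ : Matrix (Fin m) (Fin m) ℂ := h₁.1.sqrt with hR₁def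
  set R₂ : Matrix (Fin m) (Fin m) ℂ := h₂.1.sqrt with hR₂def
  have hR₁H : R₁ᴴ = R₁ := h₁.1.posSemidef_sqrt.1
  have hR₂H : R₂ᴴ = R₂ := h₂.1.posSemidef_sqrt.1
  have hR₁sq : R₁ * R₁ = ρ₁ := h₁.1.sqrt_mul_self
  have hR₂sq : R₂ * R₂ = ρ₂ := h₂.1.sqrt_mul_self
  have hmsq1 : msqrt ρ₁ = R₁ := by rw [msqrt, dif_pos h₁.1]
  have hYY : (R₁ * R₂) * (R₁ * R₂)ᴴ = R₁ * ρ₂ * R₁ := by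
    rw [conjTranspose_mul, hR₁H, hR₂H]
    calc R₁ * R₂ * (R₂ * R₁) = R₁ * (R₂ * R₂) * R₁ := by simp only [Matrix.mul_assoc]
      _ = R₁ * ρ₂ * R₁ := by rw [hR₂sq]
  have hσpsd : (R₁ * ρ₂ * R₁).PosSemidef := hYY ▸ Matrix.posSemidef_self_mul_conjTranspose _
  set S : Matrix (Fin m) (Fin m) ℂ := hσpsd.sqrt with hSdef
  obtain ⟨U, hUU, hU⟩ := polar_decomp (le_refl m) (R₁ * R₂) _ hσpsd hYY
  have hUU' : Uᴴ * U = 1 := mul_eq_one_comm.mp hUU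
  obtain ⟨V, hVV, hV⟩ := polar_decomp hmk A₁ ρ₁ h₁.1 hA₁ρ
  set A₂ : Matrix (Fin m) (Fin k) ℂ := R₂ * Uᴴ * V with hA₂def
  have hA₂A₂ : A₂ * A₂ᴴ = ρ₂ := by
    rw [hA₂def, conjTranspose_mul, conjTranspose_mul, conjTranspose_conjTranspose, hR₂H]
    calc R₂ * Uᴴ * V * (Vᴴ * (U * R₂)) = R₂ * Uᴴ * (V * Vᴴ) * (U * R₂) := by
          simp only [Matrix.mul_assoc]
      _ = R₂ * (Uᴴ * U) * R₂ := by rw [hVV, Matrix.mul_one]; simp only [Matrix.mul_assoc]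
      _ = ρ₂ := by rw [hUU', Matrix.mul_one, hR₂sq]
  refine ⟨fun s => A₂ s.1 s.2, ?_, ?_, ?_⟩
  · have hc : (∑ s : Fin m × Fin k, (‖A₂ s.1 s.2‖ ^ 2 : ℂ)) = (A₂ * A₂ᴴ).trace := by
      rw [Matrix.trace]
      simp only [Matrix.diag_apply, Matrix.mul_apply, Matrix.conjTranspose_apply,
        RCLike.star_def, Complex.mul_conj]
      rw [Fintype.sum_prod_type]
      congr 1
      ext i
      congr 1
      ext l
      rw [Complex.normSq_eq_norm_sq]
      norm_cast
    rw [hA₂A₂, h₂.2] at hc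
    exact_mod_cast hc
  · rw [hptr]
    have : Matrix.of (fun (i : Fin m) (l : Fin k) => A₂ i l) = A₂ := rfl
    rw [this, hA₂A₂]
  · have hinner : ∑ s : Fin m × Fin k, (starRingEnd ℂ) (φ₁ s) * (A₂ s.1 s.2)
        = (A₂ * A₁ᴴ).trace := by
      rw [Matrix.trace]
      simp only [Matrix.diag_apply, Matrix.mul_apply, Matrix.conjTranspose_apply,
        RCLike.star_def]
      rw [Fintype.sum_prod_type]
      exact Finset.sum_congr rfl fun i _ => Finset.sum_congr rfl fun l _ => by
        rw [hA₁def]; simp [mul_comm]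
    have htr : (A₂ * A₁ᴴ).trace = S.trace := by
      have hA₁V : A₁ = R₁ * V := hV
      rw [hA₂def, hA₁V, conjTranspose_mul, hR₁H]
      have h1 : R₂ * Uᴴ * V * (Vᴴ * R₁) = R₂ * Uᴴ * R₁ := by
        calc R₂ * Uᴴ * V * (Vᴴ * R₁) = R₂ * Uᴴ * (V * Vᴴ) * R₁ := by
              simp only [Matrix.mul_assoc]
          _ = R₂ * Uᴴ * R₁ := by rw [hVV, Matrix.mul_one]
      rw [h1, Matrix.trace_mul_cycle]
      have h2 : R₁ * R₂ * Uᴴ = S * (U * Uᴴ) := by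
        rw [hU, Matrix.mul_assoc, hSdef]
      rw [h2, hUU, Matrix.mul_one]
    have hS_herm : S.trace.im = 0 := by
      have h3 : star S.trace = S.trace := by
        rw [← Matrix.trace_conjTranspose, hσpsd.posSemidef_sqrt.1]
      simpa [Complex.ext_iff, neg_eq_iff_add_eq_zero] using
        (Complex.conj_eq_iff_im.mp h3)
    have hfid : fidelity ρ₁ ρ₂ = (S.trace.re) ^ 2 := by
      rw [fidelity, hmsq1]
      rw [show msqrt (R₁ * ρ₂ * R₁) = S from by rw [msqrt, dif_pos hσpsd]]
    rw [hinner, htr, hfid]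
    rw [Complex.sq_norm, Complex.normSq_apply, hS_herm]
    ring
end

section
/- Let ρ₁ and ρ₂ be density matrices on ℂ^d. (i) For every POVM (E_t)_{t ∈ T} on ℂ^d (a finite family of positive semidefinite matrices summing to the identity), ∑_{t ∈ T} |Re Tr(E_t·ρ₁) − Re Tr(E_t·ρ₂)| ≤ ‖ρ₁ − ρ₂‖₁. (ii) Moreover, the bound is tight: there exists a positive semidefinite matrix E with E ≤ I (i.e., I − E positive semidefinite) such that 2·(Re Tr(E·ρ₁) − Re Tr(E·ρ₂)) = ‖ρ₁ − ρ₂‖₁. (Optimality of the trace norm for distinguishing density matrices.) -/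
open Matrix BigOperators Kronecker
open scoped ComplexOrder

section Aux

open Matrix
open scoped ComplexOrder

variable {n : Type*} [Fintype n] [DecidableEq n]

lemma aux_trace_mul_diagonal (M : Matrix n n ℂ) (v : n → ℂ) :
    (M * diagonal v).trace = ∑ i, M i i * v i := by
  simp [Matrix.trace, Matrix.diag, Matrix.mul_apply, Matrix.diagonal]

lemma aux_psd_diag {F : Matrix n n ℂ} (hF : F.PosSemidef) (i : n) :
    0 ≤ (F i i).re ∧ (F i i).im = 0 := by
  have h := hF.diag_nonneg (i := i)
  exact ⟨(Complex.nonneg_iff.mp h).1, ((Complex.nonneg_iff.mp h).2).symm⟩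

/-- Trace of `M * (U * diagonal v * Uᴴ)` where `Uᴴ` cycles around. -/
lemma aux_trace_conj (M U : Matrix n n ℂ) (v : n → ℂ) :
    (M * (U * diagonal v * Uᴴ)).trace = ∑ i, (Uᴴ * M * U) i i * v i := by
  rw [show M * (U * diagonal v * Uᴴ) = M * U * diagonal v * Uᴴ by
      simp only [Matrix.mul_assoc],
    Matrix.trace_mul_cycle, ← aux_trace_mul_diagonal]
  simp only [Matrix.mul_assoc]

end Aux

/-- The trace norm bounds the statistical distance of the outcome distributions of
any POVM applied to two density matrices, and the bound is achieved by a
two-outcome measurement. -/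
theorem traceNorm_distinguishability (d : ℕ) (ρ₁ ρ₂ : Matrix (Fin d) (Fin d) ℂ)
    (h₁ : IsDensityMatrix ρ₁) (h₂ : IsDensityMatrix ρ₂) :
    (∀ (T : Type) [Fintype T], ∀ E : T → Matrix (Fin d) (Fin d) ℂ,
      (∀ t, (E t).PosSemidef) → (∑ t, E t = 1) →
      ∑ t, |((E t * ρ₁).trace).re - ((E t * ρ₂).trace).re| ≤ traceNorm (ρ₁ - ρ₂)) ∧
    (∃ E : Matrix (Fin d) (Fin d) ℂ, E.PosSemidef ∧ (1 - E).PosSemidef ∧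
      2 * (((E * ρ₁).trace).re - ((E * ρ₂).trace).re) = traceNorm (ρ₁ - ρ₂)) := by
  have hΔ : (ρ₁ - ρ₂).IsHermitian := h₁.1.1.sub h₂.1.1
  set Δ : Matrix (Fin d) (Fin d) ℂ := ρ₁ - ρ₂ with hΔdef
  set U : Matrix (Fin d) (Fin d) ℂ := (hΔ.eigenvectorUnitary : Matrix (Fin d) (Fin d) ℂ) with hUdef
  set lam : Fin d → ℝ := hΔ.eigenvalues with hlamdef
  have hU2 : Uᴴ * U = 1 := by
    have := (Matrix.mem_unitaryGroup_iff').mp hΔ.eigenvectorUnitary.2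
    simpa [Matrix.star_eq_conjTranspose] using this
  have hU1 : U * Uᴴ = 1 := by
    have := (Matrix.mem_unitaryGroup_iff).mp hΔ.eigenvectorUnitary.2
    simpa [Matrix.star_eq_conjTranspose] using this
  have hspec : Δ = U * Matrix.diagonal (fun i => (lam i : ℂ)) * Uᴴ := by
    have := hΔ.spectral_theorem
    simpa [Matrix.star_eq_conjTranspose, Function.comp_def] using this
  -- conjugation collapses
  have hconj : ∀ A B : Matrix (Fin d) (Fin d) ℂ,
      (U * A * Uᴴ) * (U * B * Uᴴ) = U * (A * B) * Uᴴ := by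
    intro A B
    simp only [Matrix.mul_assoc]
    rw [← Matrix.mul_assoc Uᴴ U, hU2, Matrix.one_mul]
  -- the key trace formula
  have keyRe : ∀ M : Matrix (Fin d) (Fin d) ℂ,
      ((M * Δ).trace).re = ∑ i, ((Uᴴ * M * U) i i).re * lam i := by
    intro M
    rw [show M * Δ = M * (U * Matrix.diagonal (fun i => (lam i : ℂ)) * Uᴴ) from by
      rw [← hspec], aux_trace_conj, Complex.re_sum]
    refine Finset.sum_congr rfl fun i _ => ?_
    simp [Complex.mul_re]
  -- the trace norm is the sum of the absolute values of the eigenvalues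
  have htn : traceNorm Δ = ∑ i, |lam i| := by
    have hP : (Δᴴ * Δ).PosSemidef := Matrix.posSemidef_conjTranspose_mul_self Δ
    have hDpsd : (Matrix.diagonal (fun i => ((|lam i| : ℝ) : ℂ))).PosSemidef :=
      Matrix.PosSemidef.diagonal fun i => Complex.zero_le_real.mpr (abs_nonneg _)
    have hS : (U * Matrix.diagonal (fun i => ((|lam i| : ℝ) : ℂ)) * Uᴴ).PosSemidef :=
      hDpsd.mul_mul_conjTranspose_same U
    have hSsq : (U * Matrix.diagonal (fun i => ((|lam i| : ℝ) : ℂ)) * Uᴴ) ^ 2 = Δᴴ * Δ := by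
      rw [hΔ.eq, pow_two, hconj, Matrix.diagonal_mul_diagonal]
      rw [hspec, hconj, Matrix.diagonal_mul_diagonal]
      have hfun : (fun i : Fin d => ((|lam i| : ℝ) : ℂ) * ((|lam i| : ℝ) : ℂ))
          = fun i => ((lam i : ℝ) : ℂ) * ((lam i : ℝ) : ℂ) := by
        funext i
        rw [← sq, ← sq]
        norm_cast
        exact sq_abs _
      rw [hfun]
    have hsqrt : msqrt (Δᴴ * Δ) = U * Matrix.diagonal (fun i => ((|lam i| : ℝ) : ℂ)) * Uᴴ := by
      rw [msqrt, dif_pos hP]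
      have e1 := hP.1.cfc_eq Real.sqrt
      have e2 := hΔ.cfc_eq (abs : ℝ → ℝ)
      rw [Matrix.IsHermitian.cfc, Unitary.conjStarAlgAut_apply] at e1 e2
      calc _ = cfc Real.sqrt (Δᴴ * Δ) := by rw [e1]; rfl
        _ = cfc (abs : ℝ → ℝ) Δ := by
          rw [hΔ.eq, ← pow_two, ← cfc_pow_id (R := ℝ) Δ 2 hΔ.isSelfAdjoint,
            ← cfc_comp Real.sqrt (fun x : ℝ => x ^ 2) Δ hΔ.isSelfAdjoint]
          congr 1
          funext x
          simp [Real.sqrt_sq_eq_abs]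
        _ = _ := by rw [e2]; rfl
    rw [traceNorm, hsqrt, Matrix.trace_mul_cycle,
      hU2, Matrix.one_mul, Matrix.trace_diagonal]
    rw [Complex.re_sum]
    simp
  -- difference of real traces as trace against Δ
  have hdiff : ∀ M : Matrix (Fin d) (Fin d) ℂ,
      ((M * ρ₁).trace).re - ((M * ρ₂).trace).re = ((M * Δ).trace).re := by
    intro M
    rw [hΔdef, Matrix.mul_sub, Matrix.trace_sub, Complex.sub_re]
  constructor
  · intro T _ E hpsd hsum
    have hF : ∀ t, (Uᴴ * E t * U).PosSemidef := fun t =>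
      (hpsd t).conjTranspose_mul_mul_same U
    have hf0 : ∀ t i, 0 ≤ ((Uᴴ * E t * U) i i).re := fun t i => (aux_psd_diag (hF t) i).1
    have hftot : ∀ i : Fin d, (∑ t, ((Uᴴ * E t * U) i i).re) = 1 := by
      intro i
      have hs : (∑ t, Uᴴ * E t * U) = 1 := by
        have : (∑ t, Uᴴ * E t * U) = Uᴴ * (∑ t, E t) * U := by
          rw [Matrix.mul_sum, Matrix.sum_mul]
        rw [this, hsum, Matrix.mul_one, hU2]
      rw [← Complex.re_sum, ← Matrix.sum_apply i i Finset.univ, hs]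
      simp [Matrix.one_apply]
    calc ∑ t, |((E t * ρ₁).trace).re - ((E t * ρ₂).trace).re|
        = ∑ t, |∑ i, ((Uᴴ * E t * U) i i).re * lam i| := by
          refine Finset.sum_congr rfl fun t _ => ?_
          rw [hdiff, keyRe]
      _ ≤ ∑ t, ∑ i, ((Uᴴ * E t * U) i i).re * |lam i| := by
          refine Finset.sum_le_sum fun t _ => ?_
          refine (Finset.abs_sum_le_sum_abs _ _).trans ?_
          refine Finset.sum_le_sum fun i _ => ?_
          rw [abs_mul, abs_of_nonneg (hf0 t i)]
      _ = ∑ i, (∑ t, ((Uᴴ * E t * U) i i).re) * |lam i| := by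
          rw [Finset.sum_comm]
          simp [Finset.sum_mul]
      _ = ∑ i, |lam i| := by
          refine Finset.sum_congr rfl fun i _ => ?_
          rw [hftot i, one_mul]
      _ = traceNorm Δ := htn.symm
  · -- the optimal two-outcome measurement
    refine ⟨U * Matrix.diagonal (fun i => if 0 < lam i then (1 : ℂ) else 0) * Uᴴ, ?_, ?_, ?_⟩
    · exact (Matrix.PosSemidef.diagonal fun i => by positivity).mul_mul_conjTranspose_same U
    · have h1E : (1 : Matrix (Fin d) (Fin d) ℂ) -
          U * Matrix.diagonal (fun i => if 0 < lam i then (1 : ℂ) else 0) * Uᴴ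
          = U * Matrix.diagonal
              (fun i => 1 - if 0 < lam i then (1 : ℂ) else 0) * Uᴴ := by
        rw [show Matrix.diagonal (fun i : Fin d => 1 - if 0 < lam i then (1 : ℂ) else 0)
            = 1 - Matrix.diagonal (fun i => if 0 < lam i then (1 : ℂ) else 0) from by
          rw [← Matrix.diagonal_one, ← Matrix.diagonal_sub]]
        rw [Matrix.mul_sub, Matrix.sub_mul, Matrix.mul_one, hU1]
      rw [h1E]
      refine (Matrix.PosSemidef.diagonal fun i => ?_).mul_mul_conjTranspose_same U
      by_cases h : 0 < lam i <;> simp [h]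
    · rw [hdiff, keyRe]
      have hFE : Uᴴ * (U * Matrix.diagonal (fun i => if 0 < lam i then (1 : ℂ) else 0) * Uᴴ) * U
          = Matrix.diagonal (fun i => if 0 < lam i then (1 : ℂ) else 0) := by
        simp only [Matrix.mul_assoc]
        rw [← Matrix.mul_assoc Uᴴ U, hU2, Matrix.one_mul, Matrix.mul_one]
      rw [hFE, htn]
      have hsumlam : ∑ i, lam i = 0 := by
        have h0 : ((1 * Δ : Matrix (Fin d) (Fin d) ℂ).trace).re = 0 := by
          rw [Matrix.one_mul, hΔdef, Matrix.trace_sub, h₁.2, h₂.2]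
          simp
        rw [keyRe 1] at h0
        rw [← h0]
        refine Finset.sum_congr rfl fun i _ => ?_
        rw [Matrix.mul_one, hU2]
        simp [Matrix.one_apply]
      calc 2 * ∑ i, ((Matrix.diagonal (fun i => if 0 < lam i then (1 : ℂ) else 0)) i i).re * lam i
          = ∑ i, (lam i + |lam i|) := by
            rw [Finset.mul_sum]
            refine Finset.sum_congr rfl fun i _ => ?_
            rw [Matrix.diagonal_apply_eq]
            rcases lt_or_ge 0 (lam i) with h | h
            · rw [if_pos h, abs_of_pos h]; simp; ring
            · rw [if_neg (not_lt.mpr h), abs_of_nonpos h]; simp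
        _ = ∑ i, |lam i| := by
            rw [Finset.sum_add_distrib, hsumlam, zero_add]
end
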